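/- Under the assumption that every row standard deviation σ_i(X) is positive, the map X ↦ P(X) is twice Fréchet differentiable at X, the map X ↦ LayerNorm(X) is twice Fréchet differentiable at X, and its second derivative in directions U, V ∈ ℝ^{m×n} is D²LayerNorm(X)[U, V] = DP(X)[U]·(V·C) + DP(X)[V]·(U·C) + D²P(X)[U, V]·M(X), where DP(X) and D²P(X) denote the first and second Fréchet derivatives of the matrix-valued map X ↦ P(X) = diag(σ(X))⁻¹ (the contribution of M vanishes at second order because M is affine in X). -/

import Mathlib

noncomputable section

open Matrix

attribute [local instance] Matrix.frobeniusNormedAddCommGroup Matrix.frobeniusNormedSpace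

/-- Frobenius norm of a real matrix. -/
def frob {m n : ℕ} (A : Matrix (Fin m) (Fin n) ℝ) : ℝ :=
  Real.sqrt (∑ i, ∑ j, A i j ^ 2)

/-- Spectral norm (largest singular value) of a real matrix: the operator norm of the
associated linear map between Euclidean spaces. -/
def spec {m n : ℕ} (A : Matrix (Fin m) (Fin n) ℝ) : ℝ :=
  ‖LinearMap.toContinuousLinearMap (Matrix.toEuclideanLin A)‖

/-- Centering matrix `C = Iₙ - (1/n)·𝟙𝟙ᵀ`. -/
def centerC (n : ℕ) : Matrix (Fin n) (Fin n) ℝ :=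
  1 - (n : ℝ)⁻¹ • Matrix.of (fun _ _ => (1 : ℝ))

/-- Row-centered matrix `M(X) = X·C`. -/
def centered {m n : ℕ} (X : Matrix (Fin m) (Fin n) ℝ) : Matrix (Fin m) (Fin n) ℝ :=
  X * centerC n

/-- Row standard deviations `σᵢ(X) = sqrt((1/n)·Σⱼ M(X)ᵢⱼ²)`. -/
def rowSigma {m n : ℕ} (X : Matrix (Fin m) (Fin n) ℝ) (i : Fin m) : ℝ :=
  Real.sqrt ((n : ℝ)⁻¹ * ∑ j, centered X i j ^ 2)

/-- `P(X) = diag(σ₁(X),…,σ_m(X))⁻¹`. -/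
def Pmat {m n : ℕ} (X : Matrix (Fin m) (Fin n) ℝ) : Matrix (Fin m) (Fin m) ℝ :=
  Matrix.diagonal fun i => (rowSigma X i)⁻¹

/-- `LayerNorm(X) = P(X)·M(X)`. -/
def layerNorm {m n : ℕ} (X : Matrix (Fin m) (Fin n) ℝ) : Matrix (Fin m) (Fin n) ℝ :=
  Pmat X * centered X

namespace LNaux

open ContinuousLinearMap Topology

section gen

variable {E F G H : Type*} [NormedAddCommGroup E] [NormedSpace ℝ E]
  [NormedAddCommGroup F] [NormedSpace ℝ F] [NormedAddCommGroup G] [NormedSpace ℝ G]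
  [NormedAddCommGroup H] [NormedSpace ℝ H]

set_option maxHeartbeats 1000000 in
lemma bilin_second (B : F →L[ℝ] G →L[ℝ] H) (L : E →L[ℝ] G) (f : E → F) (x : E)
    (hf : ContDiffAt ℝ 2 f x) :
    DifferentiableAt ℝ (fun y => B (f y) (L y)) x ∧
    DifferentiableAt ℝ (fderiv ℝ (fun y => B (f y) (L y))) x ∧
    ∀ U V : E, fderiv ℝ (fderiv ℝ (fun y => B (f y) (L y))) x U V =
      B (fderiv ℝ f x U) (L V) + B (fderiv ℝ f x V) (L U) +
      B (fderiv ℝ (fderiv ℝ f) x U V) (L x) := by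
  set N : G →L[ℝ] (E →L[ℝ] F) →L[ℝ] (E →L[ℝ] H) := (compL ℝ E F H).comp B.flip with hN
  set D : E → E →L[ℝ] H := fun y =>
    (B (f y)).comp L + N (L y) (fderiv ℝ f y) with hDdef
  have hflip : ∀ (A : E →L[ℝ] F) (z : G), (B.comp A).flip z = N z A := by
    intro A z; ext u
    simp [N]
  have hF1 : ∀ y, DifferentiableAt ℝ f y →
      HasFDerivAt (fun z => B (f z) (L z)) (D y) y := by
    intro y hy
    have hc : HasFDerivAt (fun z => B (f z)) (B.comp (fderiv ℝ f y)) y :=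
      B.hasFDerivAt.comp y hy.hasFDerivAt
    have := hc.clm_apply L.hasFDerivAt
    rwa [hflip] at this
  have hfx : DifferentiableAt ℝ f x := hf.differentiableAt two_ne_zero
  have h1 : DifferentiableAt ℝ (fun y => B (f y) (L y)) x := (hF1 x hfx).differentiableAt
  have hev : fderiv ℝ (fun y => B (f y) (L y)) =ᶠ[𝓝 x] D := by
    filter_upwards [hf.eventually (by norm_num)] with y hy
    exact (hF1 y (hy.differentiableAt two_ne_zero)).fderiv
  have hh : DifferentiableAt ℝ (fderiv ℝ f) x :=
    (hf.fderiv_right (m := 1) (le_refl (2 : WithTop ℕ∞))).differentiableAt one_ne_zero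
  set Λ : F →L[ℝ] (E →L[ℝ] H) := ((compL ℝ E G H).flip L).comp B with hΛ
  have hG1 : HasFDerivAt (fun y => (B (f y)).comp L) (Λ.comp (fderiv ℝ f x)) x :=
    Λ.hasFDerivAt.comp x hfx.hasFDerivAt
  have hc2 : HasFDerivAt (⇑N ∘ ⇑L) (N.comp L) x :=
    by exact (N.comp L).hasFDerivAt
  have hG2 : HasFDerivAt (fun y => N (L y) (fderiv ℝ f y))
      ((N (L x)).comp (fderiv ℝ (fderiv ℝ f) x) + (N.comp L).flip (fderiv ℝ f x)) x :=
    hc2.clm_apply hh.hasFDerivAt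
  have hDd : HasFDerivAt D
      (Λ.comp (fderiv ℝ f x) +
        ((N (L x)).comp (fderiv ℝ (fderiv ℝ f) x) + (N.comp L).flip (fderiv ℝ f x))) x :=
    hG1.add hG2
  have h2 : DifferentiableAt ℝ (fderiv ℝ (fun y => B (f y) (L y))) x :=
    hDd.differentiableAt.congr_of_eventuallyEq hev
  refine ⟨h1, h2, fun U V => ?_⟩
  rw [hev.fderiv_eq, hDd.fderiv]
  simp [Λ, N]
  abel

end gen

variable {m n : ℕ}

/-- Matrix multiplication as a continuous bilinear map. -/
def mulCLM : Matrix (Fin m) (Fin m) ℝ →L[ℝ]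
    Matrix (Fin m) (Fin n) ℝ →L[ℝ] Matrix (Fin m) (Fin n) ℝ :=
  LinearMap.toContinuousLinearMap
    ((LinearMap.toContinuousLinearMap :
        (Matrix (Fin m) (Fin n) ℝ →ₗ[ℝ] Matrix (Fin m) (Fin n) ℝ) ≃ₗ[ℝ]
          (Matrix (Fin m) (Fin n) ℝ →L[ℝ] Matrix (Fin m) (Fin n) ℝ)).toLinearMap.comp
      (LinearMap.mk₂ ℝ (· * ·) Matrix.add_mul
        (fun c A B => Matrix.smul_mul c A B) Matrix.mul_add
        (fun c A B => Matrix.mul_smul A c B)))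

@[simp] lemma mulCLM_apply (P : Matrix (Fin m) (Fin m) ℝ) (Z : Matrix (Fin m) (Fin n) ℝ) :
    (mulCLM P) Z = P * Z := rfl

/-- Right multiplication by the centering matrix, as a continuous linear map. -/
def centerCLM : Matrix (Fin m) (Fin n) ℝ →L[ℝ] Matrix (Fin m) (Fin n) ℝ :=
  LinearMap.toContinuousLinearMap
    { toFun := fun Y => Y * centerC n
      map_add' := fun A B => Matrix.add_mul A B _
      map_smul' := fun c A => Matrix.smul_mul c A _ }

@[simp] lemma centerCLM_apply (Y : Matrix (Fin m) (Fin n) ℝ) :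
    centerCLM Y = centered Y := rfl

/-- `diagonal` as a continuous linear map. -/
def diagCLM : (Fin m → ℝ) →L[ℝ] Matrix (Fin m) (Fin m) ℝ :=
  LinearMap.toContinuousLinearMap
    { toFun := Matrix.diagonal
      map_add' := fun a b => by
        ext i j
        by_cases h : i = j <;> simp [Matrix.diagonal_apply, h]
      map_smul' := fun c a => by
        ext i j
        by_cases h : i = j <;> simp [Matrix.diagonal_apply, h] }

@[simp] lemma diagCLM_apply (d : Fin m → ℝ) :
    (diagCLM d : Matrix (Fin m) (Fin m) ℝ) = Matrix.diagonal d := rfl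

/-- The `(i,j)` entry of the centered matrix, as a continuous linear map. -/
def centEntryCLM (i : Fin m) (j : Fin n) : Matrix (Fin m) (Fin n) ℝ →L[ℝ] ℝ :=
  LinearMap.toContinuousLinearMap
    { toFun := fun Y => centered Y i j
      map_add' := fun A B => by simp [centered, Matrix.add_mul]
      map_smul' := fun c A => by simp [centered, Matrix.smul_mul] }

lemma contDiffAt_Pmat (X : Matrix (Fin m) (Fin n) ℝ) (hσ : ∀ i, 0 < rowSigma X i) :
    ContDiffAt ℝ 2 (fun Y : Matrix (Fin m) (Fin n) ℝ => Pmat Y) X := by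
  have hcomp : ∀ i : Fin m, ContDiffAt ℝ 2
      (fun Y : Matrix (Fin m) (Fin n) ℝ => (rowSigma Y i)⁻¹) X := by
    intro i
    have hce : ∀ j : Fin n, ContDiff ℝ 2
        (fun Y : Matrix (Fin m) (Fin n) ℝ => centered Y i j) := fun j =>
      (centEntryCLM i j).contDiff
    have hg : ContDiff ℝ 2
        (fun Y : Matrix (Fin m) (Fin n) ℝ => (n : ℝ)⁻¹ * ∑ j, centered Y i j ^ 2) :=
      contDiff_const.mul (ContDiff.sum fun j _ => (hce j).pow 2)
    have hq : (0:ℝ) < (n : ℝ)⁻¹ * ∑ j, centered X i j ^ 2 := by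
      have := hσ i
      rw [rowSigma] at this
      exact Real.sqrt_pos.mp this
    have hs : ContDiffAt ℝ 2
        (fun Y : Matrix (Fin m) (Fin n) ℝ => rowSigma Y i) X :=
      (Real.contDiffAt_sqrt hq.ne').comp X hg.contDiffAt
    exact hs.inv (hσ i).ne'
  exact (diagCLM (m := m)).contDiff.contDiffAt.comp X (contDiffAt_pi.2 hcomp)

end LNaux

/-- Hessian of LayerNorm.  If every row standard deviation of `X` is
positive, then `X ↦ P(X)` and `X ↦ LayerNorm(X)` are twice Fréchet differentiable at `X`
and the second derivative of LayerNorm is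
`D²LayerNorm(X)[U,V] = DP(X)[U]·(V·C) + DP(X)[V]·(U·C) + D²P(X)[U,V]·M(X)`. -/
theorem layerNorm_second_derivative {m n : ℕ} (X : Matrix (Fin m) (Fin n) ℝ)
    (hσ : ∀ i, 0 < rowSigma X i) :
    DifferentiableAt ℝ (fun Y : Matrix (Fin m) (Fin n) ℝ => Pmat Y) X ∧
    DifferentiableAt ℝ (fderiv ℝ (fun Y : Matrix (Fin m) (Fin n) ℝ => Pmat Y)) X ∧
    DifferentiableAt ℝ (fun Y : Matrix (Fin m) (Fin n) ℝ => layerNorm Y) X ∧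
    DifferentiableAt ℝ (fderiv ℝ (fun Y : Matrix (Fin m) (Fin n) ℝ => layerNorm Y)) X ∧
    ∀ U V : Matrix (Fin m) (Fin n) ℝ,
      fderiv ℝ (fderiv ℝ (fun Y : Matrix (Fin m) (Fin n) ℝ => layerNorm Y)) X U V =
        fderiv ℝ (fun Y : Matrix (Fin m) (Fin n) ℝ => Pmat Y) X U * (V * centerC n) +
        fderiv ℝ (fun Y : Matrix (Fin m) (Fin n) ℝ => Pmat Y) X V * (U * centerC n) +
        fderiv ℝ (fderiv ℝ (fun Y : Matrix (Fin m) (Fin n) ℝ => Pmat Y)) X U V *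
          centered X := by
  have hP := LNaux.contDiffAt_Pmat X hσ
  have heq : (fun Y : Matrix (Fin m) (Fin n) ℝ => layerNorm Y) =
      fun Y => LNaux.mulCLM (Pmat Y) (LNaux.centerCLM Y) := by
    funext Y
    simp [layerNorm]
  obtain ⟨d1, d2, hval⟩ :=
    LNaux.bilin_second LNaux.mulCLM LNaux.centerCLM
      (fun Y : Matrix (Fin m) (Fin n) ℝ => Pmat Y) X hP
  refine ⟨hP.differentiableAt two_ne_zero,
    (hP.fderiv_right (m := 1) (le_refl (2 : WithTop ℕ∞))).differentiableAt one_ne_zero, ?_, ?_, ?_⟩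
  · rw [heq]; exact d1
  · rw [heq]; exact d2
  · intro U V
    rw [heq]
    have := hval U V
    exact this.trans rfl
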